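/- Let u be a node of a symbolic execution tree with state (l_e, θ_u, φ_u) at the loop entry, let θ describe one iteration of the loop core and φ its iteration condition, and let (l_x, θ̂, φ̂) describe the exit path. If w is the node reached from u by executing ν iterations of the core followed by the exit path, then w.θ = θ_u ⋄ (θ^ν ⋄ θ̂) and w.φ ≡ φ_u ∧ θ_u⟨0 ≤ ν ∧ ∀τ(0 ≤ τ < ν → θ^τ⟨φ⟩) ∧ θ^ν⟨φ̂⟩⟩. -/
import Mathlib


/-- A program state: location, symbolic memory, path condition. -/
structure PState (Loc Var : Type) where
  loc : Loc
  mem : (Var → ℤ) → (Var → ℤ)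
  pc  : (Var → ℤ) → Prop

/-- State composition `s₁ ⋄ s₂ = (l₂, θ₁ ⋄ θ₂, φ₁ ∧ θ₁⟨φ₂⟩)`. -/
def scomp {Loc Var : Type} (s₁ s₂ : PState Loc Var) : PState Loc Var :=
  ⟨s₂.loc, fun v => s₂.mem (s₁.mem v), fun v => s₁.pc v ∧ s₂.pc (s₁.mem v)⟩

/-- The node reached from `u` by `i` executions of the iteration state `it`. -/
def iterState {Loc Var : Type} (u it : PState Loc Var) : ℕ → PState Loc Var
  | 0 => u
  | n + 1 => scomp (iterState u it n) it

/-- If `w` is reached from `u = (l_e, θ_u, φ_u)` by `ν` iterations of the core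
`(l_e, θ, φ)` followed by the exit `(l_x, θ̂, φ̂)`, then
`w.θ = θ_u ⋄ (θ^ν ⋄ θ̂)` and
`w.φ ≡ φ_u ∧ θ_u⟨0 ≤ ν ∧ ∀τ(0 ≤ τ < ν → θ^τ⟨φ⟩) ∧ θ^ν⟨φ̂⟩⟩`. -/
lemma iter_mem {Loc Var : Type} (le : Loc) (θu θ : (Var → ℤ) → (Var → ℤ))
    (φu φ : (Var → ℤ) → Prop) (n : ℕ) (v : Var → ℤ) :
    (iterState (⟨le, θu, φu⟩ : PState Loc Var) ⟨le, θ, φ⟩ n).mem v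
      = (θ^[n]) (θu v) := by
  induction n with
  | zero => rfl
  | succ n ih =>
    simp [iterState, scomp, ih, Function.iterate_succ_apply']

lemma iter_pc {Loc Var : Type} (le : Loc) (θu θ : (Var → ℤ) → (Var → ℤ))
    (φu φ : (Var → ℤ) → Prop) (n : ℕ) (v : Var → ℤ) :
    (iterState (⟨le, θu, φu⟩ : PState Loc Var) ⟨le, θ, φ⟩ n).pc v
      ↔ φu v ∧ ∀ τ, τ < n → φ ((θ^[τ]) (θu v)) := by
  induction n with
  | zero => simp [iterState]
  | succ n ih =>
    simp only [iterState, scomp, ih, iter_mem]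
    constructor
    · rintro ⟨⟨h1, h2⟩, h3⟩
      refine ⟨h1, fun τ hτ => ?_⟩
      rcases Nat.lt_succ_iff_lt_or_eq.mp hτ with h | rfl
      · exact h2 τ h
      · exact h3
    · rintro ⟨h1, h2⟩
      exact ⟨⟨h1, fun τ hτ => h2 τ (hτ.trans (Nat.lt_succ_self n))⟩,
        h2 n (Nat.lt_succ_self n)⟩

theorem loop_exit_state {Loc Var : Type} (le lx : Loc)
    (θu θ θhat : (Var → ℤ) → (Var → ℤ))
    (φu φ φhat : (Var → ℤ) → Prop) (ν : ℕ) :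
    let u : PState Loc Var := ⟨le, θu, φu⟩
    let w : PState Loc Var := scomp (iterState u ⟨le, θ, φ⟩ ν) ⟨lx, θhat, φhat⟩
    (∀ v, w.mem v = θhat ((θ^[ν]) (θu v))) ∧
    (∀ v, w.pc v ↔ φu v ∧
      ((0 ≤ ν ∧ ∀ τ, τ < ν → φ ((θ^[τ]) (θu v))) ∧ φhat ((θ^[ν]) (θu v)))) := by
  refine ⟨fun v => ?_, fun v => ?_⟩
  · simp [scomp, iter_mem]
  · simp [scomp, iter_mem, iter_pc, and_assoc]
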